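/- Let H be a real Hilbert space and let T be a bounded linear operator on H such that M_T = S_{H₀} for some finite dimensional subspace H₀ of H and sup{‖Tz‖ : z ∈ H₀^⊥, ‖z‖ = 1} < ‖T‖. Let A be a bounded linear operator on H with M_T ⊆ M_A and let ε ∈ [0,1). Then T ⊥_B^ε A if and only if there exists x ∈ M_T such that |⟨Tx, Ax⟩| ≤ ε‖Tx‖‖Ax‖. -/

import Mathlib

set_option maxHeartbeats 2000000

open RealInnerProductSpace

private lemma le_one_of_sq_aux (a b : ℝ) (h : b^2 + a^2 = 1) (ha : 0 ≤ a) : a ≤ 1 := by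
  nlinarith

private lemma inner_bound_aux (G G1 G2 G3 E δ TA C s u2 : ℝ)
    (hG : G = G1 + G2 + G3) (h1 : G1 ≤ (-E - δ) * u2) (h2 : G2 ≤ TA * s) (h3 : G3 ≤ TA * s)
    (hu2 : u2 = 1 - s^2) (hC : C = E + δ + 2*TA) (hs : 0 ≤ s) (hs1 : s ≤ 1)
    (hEδ : 0 ≤ E + δ) : G ≤ -E - δ + C*s := by
  nlinarith [mul_le_mul_of_nonneg_left (by nlinarith : s^2 ≤ s) hEδ]

private lemma combine_aux (X Y G Z s l c C Dc A2 T2 E δ : ℝ)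
    (hexp : X = Y + 2*l*G + l^2*Z)
    (step1 : Y ≤ T2 - c*s^2)
    (i2 : 2*l*G ≤ 2*l*(-E - δ + C*s))
    (hkey : 2*l*C*s ≤ c*s^2 + l^2*Dc)
    (j1 : l^2*Z ≤ l^2*A2)
    (j2 : l*(l*(Dc + A2)) ≤ l*δ) :
    X ≤ T2 - 2*l*E - l*δ := by nlinarith

private lemma key_est {H : Type*} [NormedAddCommGroup H] [InnerProductSpace ℝ H] [CompleteSpace H]
    (T A : H →L[ℝ] H) (H₀ : Submodule ℝ H) [FiniteDimensional ℝ H₀]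
    (k E δ : ℝ) (hk0 : 0 ≤ k) (hk : k < ‖T‖) (hE : 0 ≤ E) (hδ : 0 < δ)
    (hTu : ∀ u ∈ H₀, ‖T u‖ = ‖T‖ * ‖u‖)
    (hTw : ∀ w ∈ H₀ᗮ, ‖T w‖ ≤ k * ‖w‖)
    (horth : ∀ u ∈ H₀, ∀ w ∈ H₀ᗮ, ⟪T u, T w⟫ = 0)
    (hex : ∃ x, x ∈ H₀ ∧ ‖x‖ = 1)
    (hneg : ∀ x, x ∈ H₀ → ‖x‖ = 1 → ⟪T x, A x⟫ ≤ -E - δ) :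
    ∃ l : ℝ, 0 < l ∧ ‖T + l • A‖ ^ 2 < ‖T‖ ^ 2 - 2 * l * E := by
  obtain ⟨c, hc_def⟩ : ∃ c : ℝ, c = ‖T‖^2 - k^2 := ⟨_, rfl⟩
  have hc : 0 < c := by nlinarith
  obtain ⟨C, hC_def⟩ : ∃ C : ℝ, C = E + δ + 2*‖T‖*‖A‖ := ⟨_, rfl⟩
  have hC : 0 < C := by rw [hC_def]; positivity
  obtain ⟨Dc, hcD, hDc0⟩ : ∃ Dc : ℝ, c * Dc = C^2 ∧ 0 ≤ Dc :=
    ⟨C^2/c, by field_simp, by positivity⟩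
  obtain ⟨l, hl, hll⟩ : ∃ l : ℝ, 0 < l ∧ l * (Dc + ‖A‖^2) ≤ δ := by
    refine ⟨δ / (Dc + ‖A‖^2 + 1), by positivity, ?_⟩
    rw [div_mul_eq_mul_div, div_le_iff₀ (by positivity)]
    nlinarith [sq_nonneg ‖A‖]
  have main : ∀ z : H, ‖z‖ = 1 → ‖(T + l • A) z‖^2 ≤ ‖T‖^2 - 2*l*E - l*δ := by
    intro z hz
    obtain ⟨u, w, hu, hw, hzuw⟩ : ∃ u w : H, u ∈ H₀ ∧ w ∈ H₀ᗮ ∧ z = u + w :=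
      ⟨(Submodule.orthogonalProjectionOnto H₀ z : H), z - (Submodule.orthogonalProjectionOnto H₀ z : H),
        (Submodule.orthogonalProjectionOnto H₀ z).2, Submodule.sub_starProjection_mem_orthogonal (K := H₀) z, by abel⟩
    have huw : ⟪u, w⟫ = 0 := (Submodule.mem_orthogonal H₀ w).mp hw u hu
    have hnorm : ‖u‖^2 + ‖w‖^2 = 1 := by
      have : ‖z‖^2 = ‖u‖^2 + 2*⟪u,w⟫ + ‖w‖^2 := by rw [hzuw]; exact norm_add_sq_real u w
      rw [huw, hz] at this; linarith
    have hwn : (0:ℝ) ≤ ‖w‖ := norm_nonneg w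
    have hun : (0:ℝ) ≤ ‖u‖ := norm_nonneg u
    have hs1 : ‖w‖ ≤ 1 := le_one_of_sq_aux _ _ hnorm hwn
    have hu1 : ‖u‖ ≤ 1 := le_one_of_sq_aux _ _ (by linarith) hun
    have hTz : T z = T u + T w := by rw [hzuw, map_add]
    have hAz : A z = A u + A w := by rw [hzuw, map_add]
    have hTz2 : ‖T z‖^2 = (‖T‖*‖u‖)^2 + ‖T w‖^2 := by
      rw [hTz, norm_add_sq_real, horth u hu w hw, hTu u hu]; ring
    have hTww : ‖T w‖ ≤ k * ‖w‖ := hTw w hw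
    have step1 : ‖T z‖^2 ≤ ‖T‖^2 - c*‖w‖^2 := by
      have h2 : ‖T w‖^2 ≤ (k*‖w‖)^2 := pow_le_pow_left₀ (norm_nonneg _) hTww 2
      have h4 : ‖u‖^2 = 1 - ‖w‖^2 := by linarith
      have hc2 : c * ‖w‖^2 = (‖T‖^2 - k^2) * ‖w‖^2 := by rw [hc_def]
      rw [hTz2, mul_pow, h4]
      linarith [h2, hc2]
    have h1 : ⟪T u, A z⟫ = ⟪T u, A u⟫ + ⟪T u, A w⟫ := by rw [hAz, inner_add_right]
    have hinner : ⟪T z, A z⟫ = ⟪T u, A u⟫ + ⟪T u, A w⟫ + ⟪T w, A z⟫ := by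
      rw [hTz, inner_add_left, h1]
    have b1 : ⟪T u, A u⟫ ≤ (-E - δ) * ‖u‖^2 := by
      by_cases hu0 : u = 0
      · simp [hu0]
      · have hn : (0:ℝ) < ‖u‖ := norm_pos_iff.mpr hu0
        have hmem : (‖u‖⁻¹ • u) ∈ H₀ := H₀.smul_mem _ hu
        have hnm : ‖(‖u‖⁻¹ • u)‖ = 1 := by
          rw [norm_smul, norm_inv, norm_norm, inv_mul_cancel₀ (ne_of_gt hn)]
        have h2 := hneg _ hmem hnm
        rw [map_smul, map_smul, real_inner_smul_left, real_inner_smul_right] at h2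
        have hinv : ‖u‖⁻¹ * ‖u‖ = 1 := inv_mul_cancel₀ (ne_of_gt hn)
        have h3 : ‖u‖⁻¹ * (‖u‖⁻¹ * ⟪T u, A u⟫) * ‖u‖^2 = ⟪T u, A u⟫ := by
          linear_combination (⟪T u, A u⟫ * (‖u‖⁻¹ * ‖u‖ + 1)) * hinv
        have h5 := mul_le_mul_of_nonneg_right h2 (sq_nonneg ‖u‖)
        rw [h3] at h5
        exact h5
    have b2 : ⟪T u, A w⟫ ≤ ‖T‖ * ‖A‖ * ‖w‖ := by
      have h4 := abs_real_inner_le_norm (T u) (A w)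
      have hTuu : ‖T u‖ ≤ ‖T‖ := by
        rw [hTu u hu]; nlinarith [norm_nonneg T]
      have hAw : ‖A w‖ ≤ ‖A‖ * ‖w‖ := A.le_opNorm w
      have habs : ⟪T u, A w⟫ ≤ ‖T u‖ * ‖A w‖ := le_trans (le_abs_self _) h4
      have h6 : ‖T u‖ * ‖A w‖ ≤ ‖T‖ * (‖A‖ * ‖w‖) :=
        mul_le_mul hTuu hAw (norm_nonneg _) (norm_nonneg T)
      linarith [habs, h6]
    have b3 : ⟪T w, A z⟫ ≤ ‖T‖ * ‖A‖ * ‖w‖ := by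
      have h4 := abs_real_inner_le_norm (T w) (A z)
      have hAzn : ‖A z‖ ≤ ‖A‖ := by
        have := A.le_opNorm z; rw [hz, mul_one] at this; exact this
      have habs : ⟪T w, A z⟫ ≤ ‖T w‖ * ‖A z‖ := le_trans (le_abs_self _) h4
      have h6 : ‖T w‖ * ‖A z‖ ≤ (k*‖w‖) * ‖A‖ :=
        mul_le_mul hTww hAzn (norm_nonneg _) (mul_nonneg hk0 hwn)
      have h7 : k*(‖w‖*‖A‖) ≤ ‖T‖*(‖w‖*‖A‖) :=
        mul_le_mul_of_nonneg_right hk.le (mul_nonneg hwn (norm_nonneg A))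
      linarith [habs, h6, h7]
    have b4 : ‖A z‖ ≤ ‖A‖ := by
      have := A.le_opNorm z; rw [hz, mul_one] at this; exact this
    have hexp : ‖(T + l • A) z‖^2 = ‖T z‖^2 + 2*l*⟪T z, A z⟫ + l^2*‖A z‖^2 := by
      have happ : (T + l • A) z = T z + l • (A z) := by
        simp [ContinuousLinearMap.add_apply, ContinuousLinearMap.smul_apply]
      rw [happ, norm_add_sq_real, real_inner_smul_right, norm_smul, Real.norm_eq_abs,
        mul_pow, sq_abs]
      ring
    have i1 : ⟪T z, A z⟫ ≤ -E - δ + C*‖w‖ :=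
      inner_bound_aux _ _ _ _ _ _ _ _ _ _ hinner b1 b2 b3 (by linarith) (by linarith [hC_def]) hwn hs1
        (by linarith)
    have i2 : 2*l*⟪T z, A z⟫ ≤ 2*l*(-E - δ + C*‖w‖) := by
      have := mul_le_mul_of_nonneg_left i1 (by positivity : (0:ℝ) ≤ 2*l)
      linarith
    have hkey : 2*l*C*‖w‖ ≤ c*‖w‖^2 + l^2*Dc := by
      nlinarith [sq_nonneg (c*‖w‖ - l*C), hc, hcD]
    have j1 : l^2*‖A z‖^2 ≤ l^2*‖A‖^2 := by
      have h7 : ‖A z‖^2 ≤ ‖A‖^2 := pow_le_pow_left₀ (norm_nonneg _) b4 2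
      nlinarith [sq_nonneg l]
    have j2 : l*(l*(Dc + ‖A‖^2)) ≤ l*δ := mul_le_mul_of_nonneg_left hll (le_of_lt hl)
    exact combine_aux _ _ _ _ _ _ _ _ _ _ _ _ _ hexp step1 i2 hkey j1 j2
  obtain ⟨x₀, hx₀m, hx₀n⟩ := hex
  have hR : 0 ≤ ‖T‖^2 - 2*l*E - l*δ := le_trans (sq_nonneg _) (main x₀ hx₀n)
  obtain ⟨B, hB0, hB2⟩ : ∃ B : ℝ, 0 ≤ B ∧ B^2 = ‖T‖^2 - 2*l*E - l*δ :=
    ⟨Real.sqrt _, Real.sqrt_nonneg _, Real.sq_sqrt hR⟩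
  have hop : ‖T + l • A‖ ≤ B := by
    apply ContinuousLinearMap.opNorm_le_bound _ hB0
    intro z
    by_cases hz0 : z = 0
    · simp [hz0]
    · have hn : (0:ℝ) < ‖z‖ := norm_pos_iff.mpr hz0
      have hnm : ‖(‖z‖⁻¹ • z)‖ = 1 := by
        rw [norm_smul, norm_inv, norm_norm, inv_mul_cancel₀ (ne_of_gt hn)]
      have h2 := main _ hnm
      rw [hB2.symm] at h2
      have h4 : ‖(T + l • A) (‖z‖⁻¹ • z)‖ ≤ B :=
        le_of_pow_le_pow_left₀ two_ne_zero hB0 h2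
      have h3 : ‖(T + l • A) (‖z‖⁻¹ • z)‖ = ‖z‖⁻¹ * ‖(T + l • A) z‖ := by
        rw [map_smul, norm_smul, norm_inv, norm_norm]
      rw [h3] at h4
      calc ‖(T + l • A) z‖ = ‖z‖ * (‖z‖⁻¹ * ‖(T + l • A) z‖) := by field_simp
        _ ≤ ‖z‖ * B := mul_le_mul_of_nonneg_left h4 (le_of_lt hn)
        _ = B * ‖z‖ := mul_comm _ _
  refine ⟨l, hl, ?_⟩
  have h5 : ‖T + l • A‖^2 ≤ B^2 :=
    pow_le_pow_left₀ (ContinuousLinearMap.opNorm_nonneg _) hop 2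
  linarith [h5, hB2, mul_pos hl hδ]


private lemma eq_zero_of_two_mul_le {a D : ℝ} (hD : 0 ≤ D)
    (h : ∀ t : ℝ, 2*(t*a) ≤ t^2*D) : a = 0 := by
  by_contra ha
  have ha2 : 0 < a^2 := by positivity
  rcases eq_or_lt_of_le hD with hD0 | hDpos
  · have h1 := h 1
    have h2 := h (-1)
    rw [← hD0] at h1 h2
    have : a = 0 := by nlinarith
    exact ha this
  · obtain ⟨q, hq⟩ : ∃ q : ℝ, q * D = a := ⟨a/D, div_mul_cancel₀ a (ne_of_gt hDpos)⟩
    have h2 := mul_le_mul_of_nonneg_right (h q) (le_of_lt hDpos)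
    have e1 : 2*(q*a)*D = 2*a*a := by rw [← hq]; ring
    have e2 : q^2*D*D = a*a := by rw [← hq]; ring
    rw [e1, e2] at h2
    nlinarith

private lemma ivt_aux {H : Type*} [NormedAddCommGroup H] [InnerProductSpace ℝ H]
    (T A : H →L[ℝ] H) (H₀ : Submodule ℝ H) (E : ℝ) (hE : 0 ≤ E)
    (hgap : ∀ x, x ∈ H₀ → ‖x‖ = 1 → E < |⟪T x, A x⟫|)
    (x y : H) (hx : x ∈ H₀) (hx1 : ‖x‖ = 1) (hy : y ∈ H₀) (hy1 : ‖y‖ = 1)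
    (hgx : ⟪T x, A x⟫ < -E) (hgy : E < ⟪T y, A y⟫) : False := by
  by_cases hxy : y = -x
  · rw [hxy, map_neg, map_neg, inner_neg_neg] at hgy
    linarith
  · have hne : ∀ t ∈ Set.Icc (0:ℝ) 1, (1-t) • x + t • y ≠ 0 := by
      intro t ht hc
      have h1 : (1-t) • x = -(t • y) := eq_neg_of_add_eq_zero_left hc
      have h2 : ‖(1-t) • x‖ = ‖t • y‖ := by rw [h1, norm_neg]
      rw [norm_smul, norm_smul, hx1, hy1, mul_one, mul_one, Real.norm_eq_abs,
        Real.norm_eq_abs, abs_of_nonneg (by linarith [ht.2] : (0:ℝ) ≤ 1 - t),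
        abs_of_nonneg ht.1] at h2
      have htv : t = 1/2 := by linarith
      apply hxy
      rw [htv] at hc
      norm_num at hc
      have h3 : x + y = 0 := by
        have h4 := congrArg (fun v : H => (2:ℝ) • v) hc
        simp only [smul_add, smul_smul, smul_zero] at h4
        norm_num at h4
        exact h4
      exact eq_neg_of_add_eq_zero_left (by rw [add_comm]; exact h3)
    set f : ℝ → H := fun t => ‖(1-t) • x + t • y‖⁻¹ • ((1-t) • x + t • y) with hf
    have hc1 : Continuous fun t : ℝ => (1-t) • x + t • y := by
      apply Continuous.add
      · exact (continuous_const.sub continuous_id).smul continuous_const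
      · exact continuous_id.smul continuous_const
    have hcf : ContinuousOn f (Set.Icc 0 1) := by
      apply ContinuousOn.smul
      · exact (hc1.norm.continuousOn).inv₀ fun t ht => norm_ne_zero_iff.mpr (hne t ht)
      · exact hc1.continuousOn
    have hcont : ContinuousOn (fun t => ⟪T (f t), A (f t)⟫) (Set.Icc 0 1) :=
      (T.continuous.comp_continuousOn hcf).inner (A.continuous.comp_continuousOn hcf)
    have hmemf : ∀ t ∈ Set.Icc (0:ℝ) 1, f t ∈ H₀ ∧ ‖f t‖ = 1 := by
      intro t ht
      constructor
      · exact H₀.smul_mem _ (H₀.add_mem (H₀.smul_mem _ hx) (H₀.smul_mem _ hy))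
      · rw [hf]
        simp only []
        rw [norm_smul, norm_inv, norm_norm,
          inv_mul_cancel₀ (norm_ne_zero_iff.mpr (hne t ht))]
    have hf0 : f 0 = x := by
      rw [hf]; simp [hx1]
    have hf1 : f 1 = y := by
      rw [hf]; simp [hy1]
    have hsub := intermediate_value_Icc (by norm_num : (0:ℝ) ≤ 1) hcont
    have hEmem : E ∈ Set.Icc (⟪T (f 0), A (f 0)⟫) (⟪T (f 1), A (f 1)⟫) := by
      rw [hf0, hf1]
      exact ⟨by linarith, by linarith⟩
    obtain ⟨t, ht, hgt⟩ := hsub hEmem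
    have hgt' : ⟪T (f t), A (f t)⟫ = E := hgt
    have hfin := hgap (f t) (hmemf t ht).1 (hmemf t ht).2
    rw [hgt', abs_of_nonneg hE] at hfin
    exact lt_irrefl E hfin

private lemma key_est2 {H : Type*} [NormedAddCommGroup H] [InnerProductSpace ℝ H]
    [CompleteSpace H]
    (T A : H →L[ℝ] H) (H₀ : Submodule ℝ H) [FiniteDimensional ℝ H₀]
    (k E : ℝ) (hk0 : 0 ≤ k) (hk : k < ‖T‖) (hE : 0 ≤ E)
    (hTu : ∀ u ∈ H₀, ‖T u‖ = ‖T‖ * ‖u‖)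
    (hTw : ∀ w ∈ H₀ᗮ, ‖T w‖ ≤ k * ‖w‖)
    (horth : ∀ u ∈ H₀, ∀ w ∈ H₀ᗮ, ⟪T u, T w⟫ = 0)
    (hex : ∃ x, x ∈ H₀ ∧ ‖x‖ = 1)
    (hstrict : ∀ x, x ∈ H₀ → ‖x‖ = 1 → ⟪T x, A x⟫ < -E) :
    ∃ l : ℝ, 0 < l ∧ ‖T + l • A‖ ^ 2 < ‖T‖ ^ 2 - 2 * l * E := by
  obtain ⟨x₀, hx₀m, hx₀n⟩ := hex
  have hKeq : {x : H | x ∈ H₀ ∧ ‖x‖ = 1} = Subtype.val '' (Metric.sphere (0 : H₀) 1) := by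
    ext v
    constructor
    · rintro ⟨hv, hn⟩
      exact ⟨⟨v, hv⟩, by simpa [Metric.mem_sphere, dist_zero_right] using hn, rfl⟩
    · rintro ⟨⟨v, hv⟩, hn, rfl⟩
      simp only [Metric.mem_sphere, dist_zero_right] at hn
      exact ⟨hv, hn⟩
  have hKc : IsCompact {x : H | x ∈ H₀ ∧ ‖x‖ = 1} := by
    rw [hKeq]
    exact (isCompact_sphere (0 : H₀) 1).image continuous_subtype_val
  have hcont : ContinuousOn (fun x : H => ⟪T x, A x⟫) {x : H | x ∈ H₀ ∧ ‖x‖ = 1} :=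
    (T.continuous.inner A.continuous).continuousOn
  obtain ⟨m, hm, hmax⟩ := hKc.exists_isMaxOn ⟨x₀, hx₀m, hx₀n⟩ hcont
  have hmδ : ⟪T m, A m⟫ < -E := hstrict m hm.1 hm.2
  refine key_est T A H₀ k E (-E - ⟪T m, A m⟫) hk0 hk hE (by linarith) hTu hTw horth
    ⟨x₀, hx₀m, hx₀n⟩ ?_
  intro v hv hn
  have h5 : ⟪T v, A v⟫ ≤ ⟪T m, A m⟫ := hmax ⟨hv, hn⟩
  linarith

/-- Let `T` be a bounded operator on a real Hilbert space whose norm attainment set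
is the unit sphere of a finite dimensional subspace `H₀`, with the norm of `T` on
`H₀ᗮ` strictly smaller than `‖T‖`, and let `A` satisfy `M_T ⊆ M_A`. Then
`T ⊥_B^ε A` iff there is `x ∈ M_T` with `|⟨Tx, Ax⟩| ≤ ε‖Tx‖‖Ax‖`. -/
theorem approx_B_orth_iff_inner_le_of_subset
    {H : Type*} [NormedAddCommGroup H] [InnerProductSpace ℝ H] [CompleteSpace H]
    (T : H →L[ℝ] H) (H₀ : Submodule ℝ H) [FiniteDimensional ℝ H₀]
    (hMT : {x : H | ‖x‖ = 1 ∧ ‖T x‖ = ‖T‖} = {x : H | x ∈ H₀ ∧ ‖x‖ = 1})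
    (hsup : sSup {r : ℝ | ∃ z ∈ H₀ᗮ, ‖z‖ = 1 ∧ r = ‖T z‖} < ‖T‖)
    (A : H →L[ℝ] H)
    (hsubset : {x : H | ‖x‖ = 1 ∧ ‖T x‖ = ‖T‖} ⊆ {x : H | ‖x‖ = 1 ∧ ‖A x‖ = ‖A‖})
    (ε : ℝ) (hε0 : 0 ≤ ε) (hε1 : ε < 1) :
    (∀ l : ℝ, ‖T + l • A‖ ^ 2 ≥ ‖T‖ ^ 2 - 2 * ε * ‖T‖ * ‖l • A‖) ↔
      ∃ x : H, ‖x‖ = 1 ∧ ‖T x‖ = ‖T‖ ∧ |⟪T x, A x⟫| ≤ ε * ‖T x‖ * ‖A x‖ := by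
  have hmem : ∀ x : H, (‖x‖ = 1 ∧ ‖T x‖ = ‖T‖) ↔ (x ∈ H₀ ∧ ‖x‖ = 1) :=
    fun x => Set.ext_iff.mp hMT x
  -- T has norm ‖T‖ on H₀
  have hTu : ∀ u ∈ H₀, ‖T u‖ = ‖T‖ * ‖u‖ := by
    intro u hu
    by_cases h0 : u = 0
    · simp [h0]
    · have hn : (0:ℝ) < ‖u‖ := norm_pos_iff.mpr h0
      have hnm : ‖(‖u‖⁻¹ • u)‖ = 1 := by
        rw [norm_smul, norm_inv, norm_norm, inv_mul_cancel₀ (ne_of_gt hn)]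
      have h1 := ((hmem _).mpr ⟨H₀.smul_mem _ hu, hnm⟩).2
      rw [map_smul, norm_smul, norm_inv, norm_norm] at h1
      have h2 := congrArg (fun r : ℝ => ‖u‖ * r) h1
      rw [← mul_assoc, mul_inv_cancel₀ (ne_of_gt hn), one_mul] at h2
      rw [h2]; ring
  -- the sup bound on the orthogonal complement
  set k : ℝ := sSup {r : ℝ | ∃ z ∈ H₀ᗮ, ‖z‖ = 1 ∧ r = ‖T z‖} with hk_def
  have hkT : k < ‖T‖ := hsup
  have hbdd : BddAbove {r : ℝ | ∃ z ∈ H₀ᗮ, ‖z‖ = 1 ∧ r = ‖T z‖} := by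
    refine ⟨‖T‖, ?_⟩
    rintro r ⟨z, hz, hz1, rfl⟩
    have := T.le_opNorm z
    rwa [hz1, mul_one] at this
  have hk0 : 0 ≤ k := by
    apply Real.sSup_nonneg
    rintro r ⟨z, hz, hz1, rfl⟩
    positivity
  have hTw : ∀ w ∈ H₀ᗮ, ‖T w‖ ≤ k * ‖w‖ := by
    intro w hw
    by_cases h0 : w = 0
    · simp [h0]
    · have hn : (0:ℝ) < ‖w‖ := norm_pos_iff.mpr h0
      have hnm : ‖(‖w‖⁻¹ • w)‖ = 1 := by
        rw [norm_smul, norm_inv, norm_norm, inv_mul_cancel₀ (ne_of_gt hn)]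
      have h1 : ‖T (‖w‖⁻¹ • w)‖ ≤ k :=
        le_csSup hbdd ⟨‖w‖⁻¹ • w, H₀ᗮ.smul_mem _ hw, hnm, rfl⟩
      rw [map_smul, norm_smul, norm_inv, norm_norm] at h1
      have h2 := mul_le_mul_of_nonneg_left h1 (le_of_lt hn)
      rw [← mul_assoc, mul_inv_cancel₀ (ne_of_gt hn), one_mul] at h2
      linarith [h2]
  -- orthogonality of images
  have horth : ∀ u ∈ H₀, ∀ w ∈ H₀ᗮ, ⟪T u, T w⟫ = 0 := by
    intro u hu w hw
    by_cases h0 : u = 0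
    · simp [h0]
    · have hn : (0:ℝ) < ‖u‖ := norm_pos_iff.mpr h0
      obtain ⟨v, hv_def⟩ : ∃ v : H, v = ‖u‖⁻¹ • u := ⟨_, rfl⟩
      have hv : v ∈ H₀ := hv_def ▸ H₀.smul_mem _ hu
      have hv1 : ‖v‖ = 1 := by
        rw [hv_def, norm_smul, norm_inv, norm_norm, inv_mul_cancel₀ (ne_of_gt hn)]
      have hvw : ⟪v, w⟫ = 0 := (Submodule.mem_orthogonal H₀ w).mp hw v hv
      have hTv : ‖T v‖ = ‖T‖ := by rw [hTu v hv, hv1, mul_one]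
      have hz : ⟪T v, T w⟫ = 0 := by
        apply eq_zero_of_two_mul_le (by positivity : (0:ℝ) ≤ ‖T‖^2*‖w‖^2)
        intro t
        have h1 : ‖T (v + t • w)‖ ≤ ‖T‖ * ‖v + t • w‖ := T.le_opNorm _
        have h2 : ‖T (v + t • w)‖^2 ≤ ‖T‖^2 * ‖v + t • w‖^2 := by
          have := pow_le_pow_left₀ (norm_nonneg _) h1 2
          rw [mul_pow] at this
          exact this
        have h3 : ‖v + t • w‖^2 = 1 + t^2*‖w‖^2 := by
          simp only [norm_add_sq_real, real_inner_smul_right, hvw, norm_smul,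
            Real.norm_eq_abs, mul_pow, sq_abs, hv1]
          try ring
        have h4 : ‖T (v + t • w)‖^2 = ‖T‖^2 + 2*(t*⟪T v, T w⟫) + t^2*‖T w‖^2 := by
          simp only [map_add, map_smul, norm_add_sq_real, real_inner_smul_right, norm_smul,
            Real.norm_eq_abs, mul_pow, sq_abs, hTv]
          try ring
        rw [h4, h3] at h2
        nlinarith [mul_nonneg (sq_nonneg t) (sq_nonneg ‖T w‖), h2]
      have hvu : ⟪T v, T w⟫ = ‖u‖⁻¹ * ⟪T u, T w⟫ := by
        rw [hv_def, map_smul, real_inner_smul_left]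
      rw [hvu] at hz
      rcases mul_eq_zero.mp hz with h | h
      · exact absurd h (inv_ne_zero (ne_of_gt hn))
      · exact h
  -- existence of a unit vector in H₀
  have hex : ∃ x, x ∈ H₀ ∧ ‖x‖ = 1 := by
    rcases eq_or_ne H₀ ⊥ with hbot | hbot
    · exfalso
      have hall : ∀ w : H, ‖T w‖ ≤ k * ‖w‖ := by
        intro w
        apply hTw
        rw [hbot, Submodule.bot_orthogonal_eq_top]
        trivial
      have := T.opNorm_le_bound hk0 hall
      linarith
    · obtain ⟨u, hu, hu0⟩ := Submodule.exists_mem_ne_zero_of_ne_bot hbot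
      have hn : (0:ℝ) < ‖u‖ := norm_pos_iff.mpr hu0
      exact ⟨‖u‖⁻¹ • u, H₀.smul_mem _ hu, by
        rw [norm_smul, norm_inv, norm_norm, inv_mul_cancel₀ (ne_of_gt hn)]⟩
  constructor
  · -- forward direction
    intro h
    by_contra hcon
    push_neg at hcon
    have hE : 0 ≤ ε*‖T‖*‖A‖ := by positivity
    have hgap : ∀ x, x ∈ H₀ → ‖x‖ = 1 → ε*‖T‖*‖A‖ < |⟪T x, A x⟫| := by
      intro x hx hn
      have h1 := (hmem x).mpr ⟨hx, hn⟩
      have h2 := hcon x h1.1 h1.2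
      have h3 : ‖A x‖ = ‖A‖ := (hsubset h1).2
      rw [h1.2, h3] at h2
      exact h2
    obtain ⟨x₀, hx₀m, hx₀n⟩ := hex
    have hgap' : ∀ A' : H →L[ℝ] H,
        (∀ x, x ∈ H₀ → ‖x‖ = 1 → ε*‖T‖*‖A‖ < |⟪T x, A' x⟫|) →
        (⟪T x₀, A' x₀⟫ < -(ε*‖T‖*‖A‖)) →
        ∃ l : ℝ, 0 < l ∧ ‖T + l • A'‖ ^ 2 < ‖T‖ ^ 2 - 2 * l * (ε*‖T‖*‖A‖) := by
      intro A' hgapA hx₀g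
      apply key_est2 T A' H₀ k (ε*‖T‖*‖A‖) hk0 hkT hE hTu hTw horth ⟨x₀, hx₀m, hx₀n⟩
      intro x hx hn
      rcases lt_abs.mp (hgapA x hx hn) with hpos | hneg
      · exact absurd (ivt_aux T A' H₀ _ hE hgapA x₀ x hx₀m hx₀n hx hn hx₀g hpos) id
      · linarith
    rcases lt_abs.mp (hgap x₀ hx₀m hx₀n) with hpos | hneg
    · -- g x₀ > E : use -A
      have hgapN : ∀ x, x ∈ H₀ → ‖x‖ = 1 → ε*‖T‖*‖A‖ < |⟪T x, (-A) x⟫| := by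
        intro x hx hn
        rw [ContinuousLinearMap.neg_apply, inner_neg_right, abs_neg]
        exact hgap x hx hn
      have hx₀g : ⟪T x₀, (-A) x₀⟫ < -(ε*‖T‖*‖A‖) := by
        rw [ContinuousLinearMap.neg_apply, inner_neg_right]
        linarith
      obtain ⟨l, hl, hlt⟩ := hgap' (-A) hgapN hx₀g
      have heq : T + l • (-A) = T + (-l) • A := by rw [smul_neg, neg_smul]
      rw [heq] at hlt
      have hhl := h (-l)
      have hns : ‖(-l) • A‖ = l * ‖A‖ := by
        have := norm_smul (-l) A
        simpa [abs_of_pos hl] using this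
      rw [hns] at hhl
      nlinarith [hhl, hlt]
    · -- g x₀ < -E : use A
      have hx₀g : ⟪T x₀, A x₀⟫ < -(ε*‖T‖*‖A‖) := by linarith
      obtain ⟨l, hl, hlt⟩ := hgap' A hgap hx₀g
      have hhl := h l
      have hns : ‖l • A‖ = l * ‖A‖ := by
        have := norm_smul l A
        simpa [abs_of_pos hl] using this
      rw [hns] at hhl
      nlinarith [hhl, hlt]
  · -- backward direction
    rintro ⟨x, hx1, hxT, hle⟩ l
    have hAx : ‖A x‖ ≤ ‖A‖ := by
      have := A.le_opNorm x; rwa [hx1, mul_one] at this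
    have h1 : ‖(T + l • A) x‖ ≤ ‖T + l • A‖ := by
      have := (T + l • A).le_opNorm x; rwa [hx1, mul_one] at this
    have h2 : ‖(T + l • A) x‖^2 = ‖T x‖^2 + 2*l*⟪T x, A x⟫ + l^2*‖A x‖^2 := by
      have happ : (T + l • A) x = T x + l • (A x) := by
        simp [ContinuousLinearMap.add_apply, ContinuousLinearMap.smul_apply]
      rw [happ, norm_add_sq_real, real_inner_smul_right, norm_smul, Real.norm_eq_abs,
        mul_pow, sq_abs]
      ring
    have h3 : ‖(T + l • A) x‖^2 ≤ ‖T + l • A‖^2 := pow_le_pow_left₀ (norm_nonneg _) h1 2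
    have h4 : ‖l • A‖ = |l| * ‖A‖ := by
      have := norm_smul l A
      simpa using this
    have k1 : -(|l| * |⟪T x, A x⟫|) ≤ l * ⟪T x, A x⟫ := by
      rw [← abs_mul]
      exact neg_abs_le _
    have k2 : |⟪T x, A x⟫| ≤ ε * ‖T‖ * ‖A x‖ := by rw [← hxT]; exact hle
    have m1 : |l| * |⟪T x, A x⟫| ≤ |l| * (ε * ‖T‖ * ‖A x‖) :=
      mul_le_mul_of_nonneg_left k2 (abs_nonneg l)
    have m2 : ε * ‖T‖ * (|l| * ‖A x‖) ≤ ε * ‖T‖ * (|l| * ‖A‖) :=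
      mul_le_mul_of_nonneg_left (mul_le_mul_of_nonneg_left hAx (abs_nonneg l))
        (by positivity)
    have hnn : 0 ≤ l^2 * ‖A x‖^2 := by positivity
    rw [h4]
    rw [hxT] at h2
    nlinarith [h2, h3, k1, m1, m2, hnn]
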